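/- Let k ≥ 2 be an integer and let a : ℕ₀ → ℂ be a multiplicative k-automatic sequence such that there exists a threshold p₀ with a(p^α) ≠ 0 for every prime p ≥ p₀ and every α ∈ ℕ. Then there exists a threshold p₃ such that for every prime p > p₃, the identity a(p·n) = a(p)·a(n) holds for almost all n ∈ ℕ, in the sense that the set of n for which it fails has upper Banach density zero. -/

import Mathlib

open scoped BigOperators

namespace MultAuto

/-- Base-`k` value of a word over `Σ_k` (most significant digit first); `[ε]_k = 0`. -/
def valk (k : ℕ) (u : List ℕ) : ℕ := u.foldl (fun acc d => k * acc + d) 0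

/-- `u` is a word over the alphabet `Σ_k = {0,…,k-1}`. -/
def IsWord (k : ℕ) (u : List ℕ) : Prop := ∀ d ∈ u, d < k

/-- `u` has no leading zeros (the empty word qualifies). -/
def NoLeadZero : List ℕ → Prop
  | [] => True
  | d :: _ => d ≠ 0

/-- `wpow v l` is the `l`-fold concatenation `v^l`. -/
def wpow (v : List ℕ) (l : ℕ) : List ℕ := (List.replicate l v).flatten

/-- Transition function of a word: `δ_{uv} = δ_u ∘ δ_v`. -/
def deltaW {S : Type*} (δ : ℕ → S → S) : List ℕ → S → S
  | [] => id
  | d :: t => δ d ∘ deltaW δ t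

/-- `a : ℕ → ℂ` is a `k`-automatic sequence. -/
def IsAutomatic (k : ℕ) (a : ℕ → ℂ) : Prop :=
  ∃ (S : Type) (_ : Fintype S) (s₀ : S) (δ : ℕ → S → S) (τ : S → ℂ),
    ∀ u : List ℕ, IsWord k u → NoLeadZero u → a (valk k u) = τ (deltaW δ u s₀)

/-- `a` is multiplicative: `a (m n) = a m * a n` for coprime positive `m, n`. -/
def IsMult (a : ℕ → ℂ) : Prop :=
  ∀ m n : ℕ, 0 < m → 0 < n → Nat.Coprime m n → a (m * n) = a m * a n

/-- The word `u_r v_r^{l_r} u_{r-1} ⋯ u_1 v_1^{l_1} u_0`. -/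
def aridWord (u v : ℕ → List ℕ) (l : ℕ → ℕ) : ℕ → List ℕ
  | 0 => u 0
  | r + 1 => u (r + 1) ++ wpow (v (r + 1)) (l (r + 1)) ++ aridWord u v l r

/-- `A` is a basic arid set of rank ≤ r in base k. -/
def BasicArid (k r : ℕ) (A : Set ℕ) : Prop :=
  ∃ u v : ℕ → List ℕ, (∀ i, IsWord k (u i)) ∧ (∀ i, IsWord k (v i)) ∧
    A = {n | ∃ l : ℕ → ℕ, n = valk k (aridWord u v l r)}

/-- `A` is an arid set of rank ≤ r: a finite union of basic arid sets of rank ≤ r. -/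
def AridOfRank (k r : ℕ) (A : Set ℕ) : Prop :=
  ∃ (m : ℕ) (B : Fin m → Set ℕ), (∀ j, BasicArid k r (B j)) ∧ A = ⋃ j, B j

/-- `A` is arid (in base `k`). -/
def Arid (k : ℕ) (A : Set ℕ) : Prop := ∃ r, AridOfRank k r A

/-- `χ : ℕ → ℂ` is a Dirichlet character of modulus `m`: completely multiplicative,
`m`-periodic, and nonvanishing exactly at integers coprime to `m`. -/
def IsDirichletLike (m : ℕ) (χ : ℕ → ℂ) : Prop :=
  0 < m ∧ (∀ a b : ℕ, 0 < a → 0 < b → χ (a * b) = χ a * χ b) ∧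
  (∀ n : ℕ, 0 < n → χ (n + m) = χ n) ∧
  (∀ n : ℕ, 0 < n → (χ n ≠ 0 ↔ Nat.Coprime n m))

/-- `(n)_k^l`: the last `l` base-`k` digits of `n`, padded with leading zeros,
most significant digit first. -/
def padk (k l n : ℕ) : List ℕ := (List.range l).reverse.map fun i => n / k ^ i % k

/-- The equivalence `n₁ ∼ n₂` on `ℕ` induced by the transition maps `δ`. -/
def EqvN (k : ℕ) {S : Type*} (δ : ℕ → S → S) (n₁ n₂ : ℕ) : Prop :=
  ∃ l₀ : ℕ, ∀ l ≥ l₀, deltaW δ (padk k l n₁) = deltaW δ (padk k l n₂)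

/-- `E ⊆ ℕ` has upper Banach density zero. -/
def UpperBanachDensityZero (E : Set ℕ) : Prop :=
  ∀ ε : ℝ, 0 < ε → ∃ N₀ : ℕ, ∀ N ≥ N₀, ∀ M : ℕ,
    ((E ∩ Set.Ico M (M + N)).ncard : ℝ) ≤ ε * N

/-! ### Auxiliary machinery for the proof of Statement 14 -/

/-- The action on states of reading the base-`k` digits of `n`,
least significant digit first. -/
def dact (k : ℕ) {S : Type*} (δ : ℕ → S → S) (n : ℕ) (s : S) : S :=
  (Nat.digits k n).foldl (fun s d => δ d s) s

/-- The action of the `L` lowest base-`k` digits of `x` (zero padded),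
least significant digit first. -/
def ppact (k : ℕ) {S : Type*} (δ : ℕ → S → S) (L x : ℕ) (s : S) : S :=
  ((List.range L).map (fun i => x / k ^ i % k)).foldl (fun s d => δ d s) s

lemma deltaW_append {S : Type*} (δ : ℕ → S → S) (u w : List ℕ) :
    deltaW δ (u ++ w) = deltaW δ u ∘ deltaW δ w := by
  induction u with
  | nil => rfl
  | cons d t ih => simp [deltaW, ih, Function.comp_assoc]

lemma deltaW_reverse {S : Type*} (δ : ℕ → S → S) (l : List ℕ) (s : S) :
    deltaW δ l.reverse s = l.foldl (fun s d => δ d s) s := by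
  induction l generalizing s with
  | nil => rfl
  | cons d t ih =>
      simp only [List.reverse_cons, deltaW_append, List.foldl_cons, Function.comp_apply]
      exact (congrArg _ (by simp [deltaW])).trans (ih (δ d s))

lemma valk_reverse (k : ℕ) (l : List ℕ) : valk k l.reverse = Nat.ofDigits k l := by
  induction l with
  | nil => rfl
  | cons d t ih =>
      simp only [valk, List.reverse_cons, List.foldl_append, List.foldl_cons, List.foldl_nil,
        Nat.ofDigits_cons]
      show k * valk k t.reverse + d = _
      rw [ih]; ring

lemma digits_decomp {k : ℕ} (hk : 2 ≤ k) :
    ∀ (L x H : ℕ), 1 ≤ H → x < k ^ L →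
      Nat.digits k (H * k ^ L + x)
        = ((List.range L).map (fun i => x / k ^ i % k)) ++ Nat.digits k H := by
  intro L
  induction L with
  | zero =>
      intro x H _ hx
      have : x = 0 := by simpa using Nat.lt_one_iff.mp (by simpa using hx)
      subst this; simp
  | succ L ih =>
      intro x H hH hx
      have hkpos : 0 < k := by omega
      have hk1 : 1 ≤ k ^ (L + 1) := Nat.one_le_pow _ _ hkpos
      have hNpos : 0 < H * k ^ (L + 1) + x := by
        have : 1 * 1 ≤ H * k ^ (L + 1) := Nat.mul_le_mul hH hk1
        omega
      rw [Nat.digits_def' (by omega : 1 < k) hNpos]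
      have e0 : H * k ^ (L + 1) + x = k * (H * k ^ L) + x := by ring
      have e1 : (H * k ^ (L + 1) + x) % k = x % k := by rw [e0, Nat.mul_add_mod]
      have e2 : (H * k ^ (L + 1) + x) / k = H * k ^ L + x / k := by
        rw [e0, Nat.mul_add_div hkpos]
      have hxk : x / k < k ^ L := by
        rw [Nat.div_lt_iff_lt_mul hkpos, ← pow_succ]; exact hx
      rw [e1, e2, ih (x / k) H hH hxk]
      have hlist : (List.range (L + 1)).map (fun i => x / k ^ i % k)
          = (x % k) :: (List.range L).map (fun i => (x / k) / k ^ i % k) := by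
        rw [List.range_succ_eq_map, List.map_cons, List.map_map]
        refine congrArg₂ _ (by simp) ?_
        refine List.map_congr_left fun i _ => ?_
        simp only [Function.comp_apply]
        rw [Nat.div_div_eq_div_mul, ← pow_succ']
      rw [hlist]; rfl

lemma dact_decomp {k : ℕ} (hk : 2 ≤ k) {S : Type*} (δ : ℕ → S → S)
    {L x H : ℕ} (hH : 1 ≤ H) (hx : x < k ^ L) (s : S) :
    dact k δ (H * k ^ L + x) s = dact k δ H (ppact k δ L x s) := by
  unfold dact ppact
  rw [digits_decomp hk L x H hH hx, List.foldl_append]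

/-- Chain of padded block actions, lowest block first. -/
def CHn (k : ℕ) {S : Type*} (δ : ℕ → S → S) (W : ℕ) : (ℕ → ℕ) → ℕ → S → S
  | _, 0, s => s
  | c, j + 1, s => CHn k δ W (fun r => c (r + 1)) j (ppact k δ W (c 0) s)

lemma CHn_congr (k : ℕ) {S : Type*} (δ : ℕ → S → S) (W : ℕ) :
    ∀ (j : ℕ) (c c' : ℕ → ℕ) (s : S),
      (∀ r < j, ppact k δ W (c r) = ppact k δ W (c' r)) →
      CHn k δ W c j s = CHn k δ W c' j s := by
  intro j
  induction j with
  | zero => intro c c' s _; rfl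
  | succ j ih =>
      intro c c' s h
      show CHn k δ W (fun r => c (r + 1)) j (ppact k δ W (c 0) s)
        = CHn k δ W (fun r => c' (r + 1)) j (ppact k δ W (c' 0) s)
      rw [h 0 (by omega)]
      exact ih _ _ _ (fun r hr => h (r + 1) (by omega))

lemma blocks {k : ℕ} (hk : 2 ≤ k) {S : Type*} (δ : ℕ → S → S) (W : ℕ) :
    ∀ (j : ℕ) (c : ℕ → ℕ) (Q : ℕ) (s : S), 1 ≤ Q → (∀ r < j, c r < k ^ W) →
      dact k δ (Q * k ^ (W * j) + ∑ r ∈ Finset.range j, c r * k ^ (W * r)) s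
        = dact k δ Q (CHn k δ W c j s) := by
  intro j
  induction j with
  | zero => intro c Q s _ _; simp [CHn]
  | succ j ih =>
      intro c Q s hQ hc
      have key : Q * k ^ (W * (j + 1)) + ∑ r ∈ Finset.range (j + 1), c r * k ^ (W * r)
          = (Q * k ^ (W * j) + ∑ r ∈ Finset.range j, c (r + 1) * k ^ (W * r)) * k ^ W
            + c 0 := by
        rw [Finset.sum_range_succ' (fun r => c r * k ^ (W * r)) j]
        have h1 : ∀ r : ℕ, c (r + 1) * k ^ (W * (r + 1))
            = (c (r + 1) * k ^ (W * r)) * k ^ W := by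
          intro r; rw [mul_assoc, ← pow_add, Nat.mul_succ]
        rw [Finset.sum_congr rfl (fun r _ => h1 r), ← Finset.sum_mul]
        have h2 : k ^ (W * (j + 1)) = k ^ (W * j) * k ^ W := by
          rw [← pow_add, Nat.mul_succ]
        rw [h2]; ring
      have hH : 1 ≤ Q * k ^ (W * j) + ∑ r ∈ Finset.range j, c (r + 1) * k ^ (W * r) := by
        have : 1 * 1 ≤ Q * k ^ (W * j) :=
          Nat.mul_le_mul hQ (Nat.one_le_pow _ _ (by omega))
        omega
      rw [key, dact_decomp hk δ hH (hc 0 (by omega)) s]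
      rw [ih (fun r => c (r + 1)) Q _ hQ (fun r hr => hc (r + 1) (by omega))]
      rfl

lemma closed_univ {n : ℕ} [NeZero n] (B : Finset (ZMod n)) (hB : B.Nonempty)
    {u : ZMod n} (hu : IsUnit u) (hcl : ∀ x ∈ B, x + u ∈ B) : B = Finset.univ := by
  obtain ⟨b₀, hb₀⟩ := hB
  have hall : ∀ m : ℕ, ∀ x ∈ B, x + m • u ∈ B := by
    intro m
    induction m with
    | zero => intro x hx; simpa using hx
    | succ m ih =>
        intro x hx
        have : x + (m + 1) • u = (x + m • u) + u := by rw [succ_nsmul]; ring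
        rw [this]
        exact hcl _ (ih x hx)
  apply Finset.eq_univ_of_forall
  intro z
  obtain ⟨uu, huu⟩ := hu
  set y : ZMod n := (z - b₀) * ↑uu⁻¹ with hy
  have hval : ((y.val : ℕ) : ZMod n) = y := ZMod.natCast_rightInverse y
  have : b₀ + y.val • u = z := by
    rw [nsmul_eq_mul, hval, hy, ← huu]
    have : (z - b₀) * ↑uu⁻¹ * ↑uu = z - b₀ := by
      rw [mul_assoc, Units.inv_mul, mul_one]
    rw [this]; ring
  rw [← this]
  exact hall _ _ hb₀

lemma cover {n : ℕ} [NeZero n] (O : ℕ → ZMod n) (hO : ∀ r, IsUnit (O r)) (z : ZMod n) :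
    ∃ T ⊆ Finset.range (Fintype.card (ZMod n)), ∑ r ∈ T, O r = z := by
  classical
  set N := Fintype.card (ZMod n) with hN
  set SS : ℕ → Finset (ZMod n) :=
    fun j => ((Finset.range j).powerset).image (fun t => ∑ r ∈ t, O r) with hSS
  have hmono : ∀ j, SS j ⊆ SS (j + 1) := by
    intro j
    apply Finset.image_subset_image
    exact Finset.powerset_mono.mpr (Finset.range_subset_range.mpr (by omega))
  have hne : ∀ j, (SS j).Nonempty := by
    intro j
    exact ⟨∑ r ∈ (∅ : Finset ℕ), O r,
      Finset.mem_image_of_mem _ (Finset.mem_powerset.mpr (Finset.empty_subset _))⟩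
  have hstep : ∀ j, ∀ x ∈ SS j, x + O j ∈ SS (j + 1) := by
    intro j x hx
    obtain ⟨t, ht, rfl⟩ := Finset.mem_image.mp hx
    rw [Finset.mem_powerset] at ht
    have hj : j ∉ t := fun h => by
      have := ht h; rw [Finset.mem_range] at this; omega
    refine Finset.mem_image.mpr ⟨insert j t, ?_, ?_⟩
    · rw [Finset.mem_powerset]
      intro x hx
      rcases Finset.mem_insert.mp hx with h | h
      · subst h; exact Finset.mem_range.mpr (by omega)
      · exact Finset.mem_range.mpr (by have := Finset.mem_range.mp (ht h); omega)
    · rw [Finset.sum_insert hj]; ring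
  have hgrow : ∀ j, SS j = Finset.univ ∨ j + 1 ≤ (SS j).card := by
    intro j
    induction j with
    | zero => right; exact Finset.card_pos.mpr (hne 0)
    | succ j ih =>
        rcases ih with h | h
        · left
          apply Finset.eq_univ_of_forall
          intro z; exact hmono j (h ▸ Finset.mem_univ z)
        · by_cases hc : ∀ x ∈ SS j, x + O j ∈ SS j
          · left
            have huniv : SS j = Finset.univ := closed_univ _ (hne j) (hO j) hc
            apply Finset.eq_univ_of_forall
            intro z; exact hmono j (huniv ▸ Finset.mem_univ z)
          · push_neg at hc
            obtain ⟨x, hx, hnx⟩ := hc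
            right
            have hsub : insert (x + O j) (SS j) ⊆ SS (j + 1) := by
              intro y hy
              rcases Finset.mem_insert.mp hy with h | h
              · subst h; exact hstep j x hx
              · exact hmono j h
            calc j + 1 + 1 ≤ (SS j).card + 1 := by omega
              _ = (insert (x + O j) (SS j)).card := (Finset.card_insert_of_notMem hnx).symm
              _ ≤ (SS (j + 1)).card := Finset.card_le_card hsub
  rcases hgrow N with h | h
  · have : z ∈ SS N := h ▸ Finset.mem_univ z
    obtain ⟨t, ht, hsum⟩ := Finset.mem_image.mp this
    exact ⟨t, Finset.mem_powerset.mp ht, hsum⟩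
  · exfalso
    have := Finset.card_le_univ (SS N)
    rw [← hN] at this
    omega

/-- in the dense case, for every sufficiently large prime `p` the identity
`a(pn) = a(p) a(n)` holds for almost all `n` (failure set of upper Banach density zero). -/
theorem stmt14 (k : ℕ) (hk : 2 ≤ k) (a : ℕ → ℂ)
    (ha : IsAutomatic k a) (hmul : IsMult a)
    (hdense : ∃ p₀ : ℕ, ∀ p : ℕ, p.Prime → p₀ ≤ p → ∀ α : ℕ, 0 < α → a (p ^ α) ≠ 0) :
    ∃ p₃ : ℕ, ∀ p : ℕ, p.Prime → p₃ < p →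
      UpperBanachDensityZero {n : ℕ | 0 < n ∧ a (p * n) ≠ a p * a n} := by
  classical
  obtain ⟨p₀, hdense⟩ := hdense
  obtain ⟨S, instS, s₀, δ, τ, hrep⟩ := ha
  haveI := instS
  haveI := Classical.decEq S
  -- every value of `a` is read off from the automaton
  have haut : ∀ n : ℕ, a n = τ (dact k δ n s₀) := by
    intro n
    have hword : IsWord k ((Nat.digits k n).reverse) := by
      intro d hd
      rw [List.mem_reverse] at hd
      exact Nat.digits_lt_base (by omega) hd
    have hlead : NoLeadZero ((Nat.digits k n).reverse) := by
      rcases List.eq_nil_or_concat (Nat.digits k n) with h | ⟨L, b, h⟩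
      · rw [h]; exact trivial
      · have hn0 : n ≠ 0 := by
          intro h0; rw [h0] at h; simp at h
        have hb := Nat.getLast_digit_ne_zero k hn0
        rw [List.concat_eq_append] at h
        rw [h, show (L ++ [b]).reverse = b :: L.reverse by simp]
        show b ≠ 0
        have hbval : (Nat.digits k n).getLast (by rw [h]; simp) = b := by
          simp only [h]
          exact List.getLast_append _
        rw [← hbval]
        exact hb
    have h := hrep _ hword hlead
    rw [valk_reverse, Nat.ofDigits_digits] at h
    rw [h, deltaW_reverse]
    rfl
  -- a 1 = 1
  have ha1 : a 1 = 1 := by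
    obtain ⟨q, hqge, hq⟩ := Nat.exists_infinite_primes p₀
    have haq : a q ≠ 0 := by
      have := hdense q hq hqge 1 one_pos; simpa using this
    have h1 := hmul q 1 hq.pos one_pos (Nat.coprime_one_right q)
    rw [mul_one] at h1
    have h2 : a q * a 1 = a q * 1 := by rw [mul_one, ← h1]
    exact mul_left_cancel₀ haq h2
  -- numbers all of whose prime factors are ≥ p₀ have nonzero value
  have rough : ∀ m : ℕ, 0 < m → (∀ q : ℕ, q.Prime → q ∣ m → p₀ ≤ q) → a m ≠ 0 := by
    intro m
    induction m using Nat.strong_induction_on with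
    | _ m ih =>
      intro hm hq
      rcases eq_or_lt_of_le (Nat.one_le_iff_ne_zero.mpr hm.ne') with h1 | h1
      · rw [← h1, ha1]; exact one_ne_zero
      · have hm1 : m ≠ 1 := by omega
        have hqp : (m.minFac).Prime := Nat.minFac_prime hm1
        have hqd : m.minFac ∣ m := Nat.minFac_dvd m
        have hαpos : 0 < m.factorization m.minFac :=
          hqp.factorization_pos_of_dvd hm.ne' hqd
        have hord : m.minFac ^ (m.factorization m.minFac)
            * (m / m.minFac ^ (m.factorization m.minFac)) = m :=
          Nat.ordProj_mul_ordCompl_eq_self m m.minFac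
        have hcpos : 0 < m / m.minFac ^ (m.factorization m.minFac) :=
          Nat.ordCompl_pos m.minFac hm.ne'
        have hccop : Nat.Coprime m.minFac (m / m.minFac ^ (m.factorization m.minFac)) :=
          Nat.coprime_ordCompl hqp hm.ne'
        have hclt : m / m.minFac ^ (m.factorization m.minFac) < m := by
          apply Nat.div_lt_self hm
          exact Nat.one_lt_pow hαpos.ne' hqp.one_lt
        have h2 : a m = a (m.minFac ^ (m.factorization m.minFac))
            * a (m / m.minFac ^ (m.factorization m.minFac)) := by
          conv_lhs => rw [← hord]
          exact hmul _ _ (pow_pos hqp.pos _) hcpos (hccop.pow_left _)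
        rw [h2]
        apply mul_ne_zero
        · exact hdense m.minFac hqp (hq _ hqp hqd) _ hαpos
        · refine ih _ hclt hcpos (fun q' hq' hq'd => ?_)
          exact hq q' hq' (hq'd.trans (Nat.ordCompl_dvd m m.minFac))
  -- the product of the small primes not dividing k
  set Q₀ : ℕ := ∏ q ∈ (Finset.range p₀).filter (fun q => Nat.Prime q ∧ ¬ q ∣ k), q with hQ₀
  have hQ₀pos : 0 < Q₀ := by
    apply Finset.prod_pos
    intro q hq
    exact (Finset.mem_filter.mp hq).2.1.pos
  set C : ℕ := Fintype.card ((S → S) × (S → S)) with hC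
  refine ⟨k + p₀ + Q₀ + C, ?_⟩
  intro p hp hpgt
  have hp2 := hp.two_le
  have hpk : ¬ p ∣ k := fun h => by
    have := Nat.le_of_dvd (by omega) h; omega
  have hp₀le : p₀ ≤ p := by omega
  have hap : a p ≠ 0 := by
    have := hdense p hp hp₀le 1 one_pos; simpa using this
  haveI : NeZero (p ^ 2) := ⟨pow_ne_zero 2 (by omega)⟩
  -- KEY: a(p^(β+1)) = a(p) * a(p^β) for all β ≥ 1
  have key : ∀ β : ℕ, 1 ≤ β → a (p ^ (β + 1)) = a p * a (p ^ β) := by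
    intro β hβ
    set w : ℕ := Q₀ * p + 1 with hw
    set g : ℕ := p * (β + 1) + 1 with hg
    set W : ℕ := w + g with hWdef
    have hkw : Q₀ * p < k ^ w := by
      calc Q₀ * p < w := by omega
        _ < 2 ^ w := Nat.lt_two_pow_self (n := w)
        _ ≤ k ^ w := Nat.pow_le_pow_left hk w
    have hkg : p ^ (β + 1) < k ^ g := by
      calc p ^ (β + 1) < (2 ^ p) ^ (β + 1) :=
            Nat.pow_lt_pow_left (Nat.lt_two_pow_self (n := p)) (by omega)
        _ = 2 ^ (p * (β + 1)) := by rw [← pow_mul]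
        _ ≤ 2 ^ g := Nat.pow_le_pow_right (by omega) (by omega)
        _ ≤ k ^ g := Nat.pow_le_pow_left hk g
    -- pigeonhole: two indices whose blocks act identically
    obtain ⟨i₁, hi₁, i₂, hi₂, hne, hfeq⟩ :=
      Finset.exists_ne_map_eq_of_card_lt_of_maps_to
        (s := Finset.range p) (t := (Finset.univ : Finset ((S → S) × (S → S))))
        (by rw [Finset.card_univ, Finset.card_range, ← hC]; omega)
        (f := fun i => (ppact k δ W (Q₀ * i), ppact k δ W (p ^ β * (Q₀ * i))))
        (fun a _ => Finset.mem_univ _)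
    obtain ⟨i, i', hii, hiR, hfe⟩ :
        ∃ i i', i < i' ∧ i' < p ∧
          ((ppact k δ W (Q₀ * i), ppact k δ W (p ^ β * (Q₀ * i)))
            = (ppact k δ W (Q₀ * i'), ppact k δ W (p ^ β * (Q₀ * i')))) := by
      rcases lt_or_gt_of_ne hne with h | h
      · exact ⟨i₁, i₂, h, Finset.mem_range.mp hi₂, hfeq⟩
      · exact ⟨i₂, i₁, h, Finset.mem_range.mp hi₁, hfeq.symm⟩
    set v : ℕ := Q₀ * i with hvdef
    set v' : ℕ := Q₀ * i' with hv'def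
    set d : ℕ := Q₀ * (i' - i) with hddef
    have hv' : v' = v + d := by
      rw [hvdef, hv'def, hddef, ← Nat.mul_add, Nat.add_sub_cancel' (le_of_lt hii)]
    have hdpos : 0 < d := Nat.mul_pos hQ₀pos (by omega)
    have hdp : ¬ p ∣ d := by
      intro h
      rcases (Nat.Prime.dvd_mul hp).mp h with h | h
      · have := Nat.le_of_dvd hQ₀pos h; omega
      · have := Nat.le_of_dvd (by omega) h; omega
    have hv'lt : v' < k ^ w := by
      calc v' = Q₀ * i' := hv'def
        _ < Q₀ * p := mul_lt_mul_of_pos_left hiR hQ₀pos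
        _ < k ^ w := hkw
    have hpe0 : ppact k δ W v = ppact k δ W v' := congrArg Prod.fst hfe
    have hpeβ : ppact k δ W (p ^ β * v) = ppact k δ W (p ^ β * v') := congrArg Prod.snd hfe
    -- the family of numbers
    set bl : Finset ℕ → ℕ → ℕ := fun T r => if r ∈ T then v' else v with hbl
    set X : Finset ℕ → ℕ :=
      fun T => Q₀ * k ^ (W * p ^ 2) + ∑ r ∈ Finset.range (p ^ 2), bl T r * k ^ (W * r) with hX
    set MM : Finset ℕ → ℕ := fun T => X T * k ^ g + 1 with hMM
    have hbl_lt : ∀ T r, bl T r < k ^ w := by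
      intro T r
      have hvlt : v < k ^ w := by
        have : v ≤ v' := by omega
        omega
      by_cases h : r ∈ T
      · simp only [hbl, if_pos h]; exact hv'lt
      · simp only [hbl, if_neg h]; exact hvlt
    have hblock_lt : ∀ (ι : ℕ), ι ≤ β + 1 → ∀ T r, p ^ ι * bl T r < k ^ W := by
      intro ι hι T r
      have h1 : p ^ ι ≤ p ^ (β + 1) := Nat.pow_le_pow_right (by omega) hι
      calc p ^ ι * bl T r < k ^ g * k ^ w :=
            Nat.mul_lt_mul'' (lt_of_le_of_lt h1 hkg) (hbl_lt T r)
        _ = k ^ W := by rw [← pow_add, hWdef, Nat.add_comm]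
    have hXpos : ∀ T, 1 ≤ X T := by
      intro T
      have : 1 * 1 ≤ Q₀ * k ^ (W * p ^ 2) :=
        Nat.mul_le_mul hQ₀pos (Nat.one_le_pow _ _ (by omega))
      have h2 : X T = Q₀ * k ^ (W * p ^ 2)
          + ∑ r ∈ Finset.range (p ^ 2), bl T r * k ^ (W * r) := rfl
      omega
    -- state equality across the family
    have stEq : ∀ (ι : ℕ), ι ≤ β + 1 →
        ppact k δ W (p ^ ι * v) = ppact k δ W (p ^ ι * v') →
        ∀ T T' : Finset ℕ, dact k δ (p ^ ι * MM T) s₀ = dact k δ (p ^ ι * MM T') s₀ := by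
      intro ι hι hpe T T'
      have hgen : ∀ T'' : Finset ℕ, dact k δ (p ^ ι * MM T'') s₀
          = dact k δ (p ^ ι * Q₀)
              (CHn k δ W (fun r => p ^ ι * bl T'' r) (p ^ 2) (ppact k δ g (p ^ ι) s₀)) := by
        intro T''
        have e1 : p ^ ι * MM T'' = (p ^ ι * X T'') * k ^ g + p ^ ι := by
          simp only [hMM]; ring
        have hXp : 1 ≤ p ^ ι * X T'' :=
          Nat.mul_le_mul (Nat.one_le_pow _ _ (by omega)) (hXpos T'')
        have hpig : p ^ ι < k ^ g :=
          lt_of_le_of_lt (Nat.pow_le_pow_right (by omega) hι) hkg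
        rw [e1, dact_decomp hk δ hXp hpig s₀]
        have e2 : p ^ ι * X T'' = (p ^ ι * Q₀) * k ^ (W * p ^ 2)
            + ∑ r ∈ Finset.range (p ^ 2), (p ^ ι * bl T'' r) * k ^ (W * r) := by
          simp only [hX, mul_add, Finset.mul_sum, mul_assoc]
        rw [e2, blocks hk δ W (p ^ 2) (fun r => p ^ ι * bl T'' r) (p ^ ι * Q₀)
          (ppact k δ g (p ^ ι) s₀)
          (Nat.mul_le_mul (Nat.one_le_pow _ _ (by omega)) hQ₀pos)
          (fun r _ => hblock_lt ι hι T'' r)]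
      rw [hgen T, hgen T']
      congr 1
      apply CHn_congr
      intro r _
      have hcommon : ∀ T₀ : Finset ℕ,
          ppact k δ W (p ^ ι * bl T₀ r) = ppact k δ W (p ^ ι * v) := by
        intro T₀
        by_cases h : r ∈ T₀
        · simp only [hbl, if_pos h]; exact hpe.symm
        · simp only [hbl, if_neg h]
      rw [hcommon T, hcommon T']
    -- arithmetic form of the family
    have hMform : ∀ T : Finset ℕ, T ⊆ Finset.range (p ^ 2) →
        MM T = MM ∅ + d * ∑ r ∈ T, k ^ (W * r + g) := by
      intro T hT
      have hXf : X T = X ∅ + d * ∑ r ∈ T, k ^ (W * r) := by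
        have hterm : ∀ r, bl T r * k ^ (W * r)
            = v * k ^ (W * r) + (if r ∈ T then d * k ^ (W * r) else 0) := by
          intro r
          by_cases h : r ∈ T
          · simp only [hbl, if_pos h, hv']; ring
          · simp only [hbl, if_neg h]; ring
        have hsum : ∑ r ∈ Finset.range (p ^ 2), bl T r * k ^ (W * r)
            = ∑ r ∈ Finset.range (p ^ 2), v * k ^ (W * r)
              + ∑ r ∈ Finset.range (p ^ 2), (if r ∈ T then d * k ^ (W * r) else 0) := by
          rw [← Finset.sum_add_distrib]
          exact Finset.sum_congr rfl (fun r _ => hterm r)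
        have hite : ∑ r ∈ Finset.range (p ^ 2), (if r ∈ T then d * k ^ (W * r) else 0)
            = d * ∑ r ∈ T, k ^ (W * r) := by
          rw [← Finset.sum_filter, Finset.filter_mem_eq_inter,
            Finset.inter_eq_right.mpr hT, Finset.mul_sum]
        have hXe : X ∅ = Q₀ * k ^ (W * p ^ 2)
            + ∑ r ∈ Finset.range (p ^ 2), v * k ^ (W * r) := by
          simp [hX, hbl]
        show Q₀ * k ^ (W * p ^ 2) + ∑ r ∈ Finset.range (p ^ 2), bl T r * k ^ (W * r) = _
        rw [hsum, hite, hXe]; ring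
      have hs : (∑ r ∈ T, k ^ (W * r)) * k ^ g = ∑ r ∈ T, k ^ (W * r + g) := by
        rw [Finset.sum_mul]
        exact Finset.sum_congr rfl (fun r _ => by rw [← pow_add])
      show X T * k ^ g + 1 = (X ∅ * k ^ g + 1) + d * ∑ r ∈ T, k ^ (W * r + g)
      rw [hXf, ← hs]; ring
    -- choose members with the right residues mod p²
    set O : ℕ → ZMod (p ^ 2) := fun r => ((d * k ^ (W * r + g) : ℕ) : ZMod (p ^ 2)) with hO
    have hOunit : ∀ r, IsUnit (O r) := by
      intro r
      rw [ZMod.isUnit_iff_coprime]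
      have hdcop : Nat.Coprime d p := ((hp.coprime_iff_not_dvd).mpr hdp).symm
      have hkcop : Nat.Coprime k p := ((hp.coprime_iff_not_dvd).mpr hpk).symm
      have h1 : Nat.Coprime (d * k ^ (W * r + g)) p :=
        Nat.coprime_mul_iff_left.mpr ⟨hdcop, hkcop.pow_left _⟩
      exact h1.pow_right 2
    have hcards : Fintype.card (ZMod (p ^ 2)) = p ^ 2 := ZMod.card _
    obtain ⟨T₁, hT₁sub, hT₁⟩ :=
      cover O hOunit ((p : ZMod (p ^ 2)) - ((MM ∅ : ℕ) : ZMod (p ^ 2)))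
    obtain ⟨T₂, hT₂sub, hT₂⟩ :=
      cover O hOunit ((1 : ZMod (p ^ 2)) - ((MM ∅ : ℕ) : ZMod (p ^ 2)))
    rw [hcards] at hT₁sub hT₂sub
    have hcast : ∀ T : Finset ℕ, T ⊆ Finset.range (p ^ 2) →
        ((MM T : ℕ) : ZMod (p ^ 2)) = ((MM ∅ : ℕ) : ZMod (p ^ 2)) + ∑ r ∈ T, O r := by
      intro T hT
      rw [hMform T hT]
      push_cast
      congr 1
      rw [Finset.mul_sum]
      refine Finset.sum_congr rfl (fun r _ => ?_)
      simp only [hO]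
      push_cast
      ring
    have hM₁cast : ((MM T₁ : ℕ) : ZMod (p ^ 2)) = ((p : ℕ) : ZMod (p ^ 2)) := by
      rw [hcast T₁ hT₁sub, hT₁]; ring
    have hM₂cast : ((MM T₂ : ℕ) : ZMod (p ^ 2)) = ((1 : ℕ) : ZMod (p ^ 2)) := by
      rw [hcast T₂ hT₂sub, hT₂]; push_cast; ring
    have hplt2 : p < p ^ 2 := by have h := hp2; nlinarith
    have hmod₁ : MM T₁ % p ^ 2 = p := by
      have h := (ZMod.natCast_eq_natCast_iff _ _ _).mp hM₁cast
      have h2 : MM T₁ % p ^ 2 = p % p ^ 2 := h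
      rw [h2, Nat.mod_eq_of_lt hplt2]
    have hmod₂ : MM T₂ % p ^ 2 = 1 := by
      have h := (ZMod.natCast_eq_natCast_iff _ _ _).mp hM₂cast
      have h2 : MM T₂ % p ^ 2 = 1 % p ^ 2 := h
      rw [h2, Nat.mod_eq_of_lt (Nat.one_lt_pow (by omega) (by omega))]
    -- decompose M₁ = p * W₁ with p ∤ W₁
    have hdm₁ := Nat.div_add_mod (MM T₁) (p ^ 2)
    have hMT₁ : MM T₁ = p ^ 2 * (MM T₁ / p ^ 2) + p := by omega
    have hMW : MM T₁ = p * (p * (MM T₁ / p ^ 2) + 1) := by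
      conv_lhs => rw [hMT₁]
      ring
    set W₁ : ℕ := p * (MM T₁ / p ^ 2) + 1 with hW₁def
    have hpW₁ : ¬ p ∣ W₁ := by
      intro h
      have h1 : p ∣ 1 := (Nat.dvd_add_right (dvd_mul_right p _)).mp h
      have := Nat.le_of_dvd one_pos h1; omega
    have hW₁pos : 0 < W₁ := by omega
    have hpM₂ : ¬ p ∣ MM T₂ := by
      intro h
      have hdm₂ := Nat.div_add_mod (MM T₂) (p ^ 2)
      have h2 : MM T₂ = p ^ 2 * (MM T₂ / p ^ 2) + 1 := by omega
      have h3 : p ∣ p ^ 2 * (MM T₂ / p ^ 2) :=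
        dvd_mul_of_dvd_left (dvd_pow_self p (by omega)) _
      have h4 : p ∣ 1 := (Nat.dvd_add_right h3).mp (h2 ▸ h)
      have := Nat.le_of_dvd one_pos h4; omega
    -- all prime factors of M₂ are ≥ p₀
    have hQdvdX : ∀ T, Q₀ ∣ X T := by
      intro T
      apply dvd_add
      · exact dvd_mul_right _ _
      · apply Finset.dvd_sum
        intro r _
        apply dvd_mul_of_dvd_left
        by_cases h : r ∈ T
        · simp only [hbl, if_pos h, hv'def]; exact dvd_mul_right _ _
        · simp only [hbl, if_neg h, hvdef]; exact dvd_mul_right _ _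
    have hroughM₂ : ∀ q : ℕ, q.Prime → q ∣ MM T₂ → p₀ ≤ q := by
      intro q hq hqd
      by_contra hlt
      push_neg at hlt
      have hMeq : MM T₂ = X T₂ * k ^ g + 1 := rfl
      have hq1 : q ∣ 1 := by
        by_cases hqk : q ∣ k
        · have h1 : q ∣ X T₂ * k ^ g :=
            dvd_mul_of_dvd_right (dvd_pow hqk (by omega : g ≠ 0)) _
          exact (Nat.dvd_add_right h1).mp (hMeq ▸ hqd)
        · have hqQ : q ∣ Q₀ := by
            rw [hQ₀]
            exact Finset.dvd_prod_of_mem _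
              (Finset.mem_filter.mpr ⟨Finset.mem_range.mpr hlt, hq, hqk⟩)
          obtain ⟨c, hc⟩ := hQdvdX T₂
          have h1 : q ∣ X T₂ * k ^ g := by
            rw [hc]
            exact dvd_mul_of_dvd_left (dvd_mul_of_dvd_left hqQ c) _
          exact (Nat.dvd_add_right h1).mp (hMeq ▸ hqd)
      have := Nat.le_of_dvd one_pos hq1
      have := hq.two_le; omega
    have hM₂pos : 0 < MM T₂ := by
      have : MM T₂ = X T₂ * k ^ g + 1 := rfl
      omega
    have haM₂ : a (MM T₂) ≠ 0 := rough _ hM₂pos hroughM₂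
    -- equal values across the family
    have hval0 : a (MM T₁) = a (MM T₂) := by
      rw [haut (MM T₁), haut (MM T₂)]
      have h := stEq 0 (by omega) (by simpa using hpe0) T₁ T₂
      simpa using congrArg τ h
    have hvalβ : a (p ^ β * MM T₁) = a (p ^ β * MM T₂) := by
      rw [haut, haut]
      exact congrArg τ (stEq β (by omega) hpeβ T₁ T₂)
    -- multiplicativity relations
    have hcop : Nat.Coprime p W₁ := (hp.coprime_iff_not_dvd).mpr hpW₁
    have e1 : a (MM T₁) = a p * a W₁ := by
      rw [hMW]; exact hmul p W₁ (by omega) hW₁pos hcop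
    have e2 : a (p ^ β * MM T₁) = a (p ^ (β + 1)) * a W₁ := by
      have h : p ^ β * MM T₁ = p ^ (β + 1) * W₁ := by rw [hMW, pow_succ]; ring
      rw [h]
      exact hmul _ _ (pow_pos (by omega) _) hW₁pos (hcop.pow_left _)
    have e3 : a (p ^ β * MM T₂) = a (p ^ β) * a (MM T₂) :=
      hmul _ _ (pow_pos (by omega) _) hM₂pos
        (((hp.coprime_iff_not_dvd).mpr hpM₂).pow_left _)
    have final : a (p ^ (β + 1)) * a (MM T₂) = (a p * a (p ^ β)) * a (MM T₂) := by
      calc a (p ^ (β + 1)) * a (MM T₂)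
          = a (p ^ (β + 1)) * (a p * a W₁) := by rw [← e1, hval0]
        _ = a p * (a (p ^ (β + 1)) * a W₁) := by ring
        _ = a p * (a (p ^ β) * a (MM T₂)) := by rw [← e2, hvalβ, e3]
        _ = (a p * a (p ^ β)) * a (MM T₂) := by ring
    exact mul_right_cancel₀ haM₂ final
  -- the identity holds for ALL positive n
  have identity : ∀ n : ℕ, 0 < n → a (p * n) = a p * a n := by
    intro n hn
    by_cases hdvd : p ∣ n
    · have hαpos : 0 < n.factorization p := hp.factorization_pos_of_dvd hn.ne' hdvd
      have hord : p ^ (n.factorization p) * (n / p ^ (n.factorization p)) = n :=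
        Nat.ordProj_mul_ordCompl_eq_self n p
      have hmpos : 0 < n / p ^ (n.factorization p) := Nat.ordCompl_pos p hn.ne'
      have hcop : Nat.Coprime p (n / p ^ (n.factorization p)) :=
        Nat.coprime_ordCompl hp hn.ne'
      have h1 : p * n = p ^ (n.factorization p + 1) * (n / p ^ (n.factorization p)) := by
        conv_lhs => rw [← hord]
        rw [pow_succ]; ring
      rw [h1, hmul _ _ (pow_pos (by omega) _) hmpos (hcop.pow_left _), key _ hαpos,
        mul_assoc, ← hmul _ _ (pow_pos (by omega) _) hmpos (hcop.pow_left _), hord]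
    · exact hmul p n (by omega) hn ((hp.coprime_iff_not_dvd).mpr hdvd)
  -- hence the failure set is empty
  intro ε hε
  refine ⟨1, fun N hN M => ?_⟩
  have hempty : {n : ℕ | 0 < n ∧ a (p * n) ≠ a p * a n} = (∅ : Set ℕ) := by
    ext n
    simp only [Set.mem_setOf_eq, Set.mem_empty_iff_false, iff_false, not_and, ne_eq, not_not]
    exact fun hn => identity n hn
  rw [hempty, Set.empty_inter, Set.ncard_empty]
  have : (0 : ℝ) ≤ ε * N := mul_nonneg hε.le (Nat.cast_nonneg N)
  simpa using this

end MultAuto
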